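/- If X is a length space in which for any two distinct points x,y there is a unique rectifiable arc with endpoints x and y, then X is a geodesic space. -/

import Mathlib

open Set Metric
open scoped ENNReal NNReal

/-- A curve from `x` to `y` parameterized on `[0,1]`. -/
def IsCurveOn {X : Type*} [PseudoEMetricSpace X] (γ : ℝ → X) (x y : X) : Prop :=
  ContinuousOn γ (Set.Icc 0 1) ∧ γ 0 = x ∧ γ 1 = y

/-- The set of lengths of curves from `x` to `y`. -/
def curveLengths {X : Type*} [PseudoEMetricSpace X] (x y : X) : Set ℝ≥0∞ :=
  {ℓ | ∃ γ : ℝ → X, IsCurveOn γ x y ∧ eVariationOn γ (Set.Icc 0 1) = ℓ}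

/-- `X` is a length space if the distance between any two points equals the infimum
of lengths of curves connecting them. -/
def IsLengthSpace (X : Type*) [PseudoEMetricSpace X] : Prop :=
  ∀ x y : X, edist x y = sInf (curveLengths x y)

/-- `X` is a geodesic space if any two points are joined by a curve whose length
equals the distance between them. -/
def IsGeodesicSpace (X : Type*) [PseudoEMetricSpace X] : Prop :=
  ∀ x y : X, ∃ γ : ℝ → X, IsCurveOn γ x y ∧ eVariationOn γ (Set.Icc 0 1) = edist x y

/-- `A` is an arc with endpoints `x` and `y`: a homeomorphic image of `[0,1]`,
parameterized by an injective continuous curve from `x` to `y`. -/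
def IsArc {X : Type*} [PseudoEMetricSpace X] (A : Set X) (x y : X) : Prop :=
  ∃ γ : ℝ → X, IsCurveOn γ x y ∧ Set.InjOn γ (Set.Icc 0 1) ∧ γ '' Set.Icc 0 1 = A

/-- `A` is a rectifiable arc with endpoints `x` and `y`. -/
def IsRectArc {X : Type*} [PseudoEMetricSpace X] (A : Set X) (x y : X) : Prop :=
  ∃ γ : ℝ → X, IsCurveOn γ x y ∧ Set.InjOn γ (Set.Icc 0 1) ∧ γ '' Set.Icc 0 1 = A ∧
    eVariationOn γ (Set.Icc 0 1) ≠ ⊤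

/-- A metric tree: a geodesic space in which any two distinct points are joined by a
unique arc. -/
def IsMetricTree (X : Type*) [PseudoEMetricSpace X] : Prop :=
  IsGeodesicSpace X ∧ ∀ x y : X, x ≠ y → ∃! A : Set X, IsArc A x y


section Auxiliary

open Set Metric
open scoped BoundedContinuousFunction

variable {X : Type*} [MetricSpace X]

private lemma evar_Icc_add_Icc (f : ℝ → X) {a b c : ℝ}
    (hab : a ≤ b) (hbc : b ≤ c) :
    eVariationOn f (Icc a b) + eVariationOn f (Icc b c) = eVariationOn f (Icc a c) := by
  have := eVariationOn.Icc_add_Icc f (s := univ) hab hbc (mem_univ b)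
  simpa using this

private lemma quarter_add_quarter (ε : ℝ≥0∞) : ε / 4 + ε / 4 = ε / 2 := by
  rw [ENNReal.div_add_div_same, ← two_mul, show (4 : ℝ≥0∞) = 2 * 2 from by norm_num,
    ENNReal.mul_div_mul_left _ _ two_ne_zero ENNReal.ofNat_ne_top]

/-- Right smallness of variation near the left endpoint. -/
private lemma evar_right_small (f : ℝ → X) {A B : ℝ} (hAB : A < B)
    (hf : ContinuousOn f (Icc A B)) (hV : eVariationOn f (Icc A B) ≠ ⊤)
    {ε : ℝ≥0∞} (hε : 0 < ε) (hεt : ε ≠ ⊤) :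
    ∃ b ∈ Ioc A B, eVariationOn f (Icc A b) < ε := by
  set W := eVariationOn f (Icc A B) with hW
  by_cases hWε : W < ε
  · exact ⟨B, ⟨hAB, le_rfl⟩, hWε⟩
  push_neg at hWε
  have hW0 : W ≠ 0 := (hε.trans_le hWε).ne'
  have h4 : (0:ℝ≥0∞) < ε / 4 := ENNReal.div_pos hε.ne' (by norm_num)
  have hsub : W - ε / 4 < W := ENNReal.sub_lt_self hV hW0 h4.ne'
  rw [hW] at hsub
  obtain ⟨⟨n, ⟨u, hu, us⟩⟩, hS⟩ :
      ∃ p : ℕ × { u : ℕ → ℝ // Monotone u ∧ ∀ i, u i ∈ Icc A B },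
        W - ε / 4 < ∑ i ∈ Finset.range p.1,
          edist (f ((p.2 : ℕ → ℝ) (i + 1))) (f ((p.2 : ℕ → ℝ) i)) :=
    lt_iSup_iff.mp hsub
  -- choose modulus η
  set c2 : ℝ≥0∞ := 2 * ((n : ℝ≥0∞) + 1) with hc2
  have hc20 : c2 ≠ 0 := by simp [hc2]
  have hc2t : c2 ≠ ⊤ := by
    simp [hc2, ENNReal.mul_ne_top, ENNReal.add_ne_top]
  set η : ℝ≥0∞ := ε / 4 / c2 with hη
  have hη0 : 0 < η := ENNReal.div_pos h4.ne' hc2t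
  have hnη : (n : ℝ≥0∞) * (2 * η) ≤ ε / 4 := by
    have h1 : (n : ℝ≥0∞) * (2 * η) ≤ c2 * η := by
      rw [show (n : ℝ≥0∞) * (2 * η) = (2 * (n : ℝ≥0∞)) * η by ring]
      exact mul_le_mul_left (mul_le_mul_right le_self_add 2) η
    have h2 : c2 * η = ε / 4 := ENNReal.mul_div_cancel hc20 hc2t
    exact h1.trans h2.le
  -- continuity at A
  have hcw : ContinuousWithinAt f (Icc A B) A := hf A ⟨le_rfl, hAB.le⟩
  have hmem : f ⁻¹' Metric.eball (f A) η ∈ nhdsWithin A (Icc A B) :=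
    hcw (EMetric.ball_mem_nhds _ hη0)
  obtain ⟨δ, hδ0, hδ⟩ := Metric.mem_nhdsWithin_iff.mp hmem
  set b := min (A + δ / 2) B with hb
  have hbmem : b ∈ Ioc A B := ⟨lt_min (by linarith) hAB, min_le_right _ _⟩
  have hball : ∀ t ∈ Icc A b, edist (f t) (f A) < η := by
    intro t ht
    have h1 : t ≤ A + δ / 2 := ht.2.trans (min_le_left _ _)
    have h2 : t ∈ Metric.ball A δ := by
      rw [Metric.mem_ball, Real.dist_eq, abs_of_nonneg (by linarith [ht.1])]
      linarith
    have := hδ ⟨h2, ht.1, ht.2.trans hbmem.2⟩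
    rwa [Set.mem_preimage, Metric.mem_eball] at this
  set v : ℕ → ℝ := fun i => max (u i) b with hv
  have hvmono : Monotone v := fun i j h => max_le_max (hu h) le_rfl
  have vs : ∀ i, v i ∈ Icc b B := fun i => ⟨le_max_right _ _, max_le (us i).2 hbmem.2⟩
  have key : ∀ i, edist (f (u (i + 1))) (f (u i)) ≤ edist (f (v (i + 1))) (f (v i)) + 2 * η := by
    intro i
    have hmemi : u i ∈ Icc A B := us i
    rcases le_total b (u i) with h1 | h1
    · have h2 : b ≤ u (i + 1) := h1.trans (hu (Nat.le_succ i))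
      rw [show v i = u i from max_eq_left h1, show v (i + 1) = u (i + 1) from max_eq_left h2]
      exact le_self_add
    · have hui : u i ∈ Icc A b := ⟨(us i).1, h1⟩
      have hedui : edist (f b) (f (u i)) ≤ 2 * η := by
        calc edist (f b) (f (u i)) ≤ edist (f b) (f A) + edist (f A) (f (u i)) :=
              edist_triangle _ _ _
          _ ≤ η + η := add_le_add (hball b ⟨hbmem.1.le, le_rfl⟩).le
              (by rw [edist_comm]; exact (hball _ hui).le)
          _ = 2 * η := (two_mul η).symm
      rcases le_total b (u (i + 1)) with h2 | h2
      · -- straddling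
        rw [show v i = b from max_eq_right h1, show v (i + 1) = u (i + 1) from max_eq_left h2]
        calc edist (f (u (i + 1))) (f (u i))
            ≤ edist (f (u (i + 1))) (f b) + edist (f b) (f (u i)) := edist_triangle _ _ _
          _ ≤ edist (f (u (i + 1))) (f b) + 2 * η := add_le_add_right hedui _
      · -- both small
        have hui1 : u (i + 1) ∈ Icc A b := ⟨(us (i + 1)).1, h2⟩
        rw [show v i = b from max_eq_right h1, show v (i + 1) = b from max_eq_right h2]
        calc edist (f (u (i + 1))) (f (u i))
            ≤ edist (f (u (i + 1))) (f A) + edist (f A) (f (u i)) := edist_triangle _ _ _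
          _ ≤ η + η := add_le_add (hball _ hui1).le
              (by rw [edist_comm]; exact (hball _ hui).le)
          _ = 2 * η := (two_mul η).symm
          _ ≤ edist (f b) (f b) + 2 * η := le_add_self
  have sumle : ∑ i ∈ Finset.range n, edist (f (u (i + 1))) (f (u i)) ≤
      (∑ i ∈ Finset.range n, edist (f (v (i + 1))) (f (v i))) + (n : ℝ≥0∞) * (2 * η) := by
    calc ∑ i ∈ Finset.range n, edist (f (u (i + 1))) (f (u i))
        ≤ ∑ i ∈ Finset.range n, (edist (f (v (i + 1))) (f (v i)) + 2 * η) :=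
          Finset.sum_le_sum fun i _ => key i
      _ = (∑ i ∈ Finset.range n, edist (f (v (i + 1))) (f (v i))) + (n : ℝ≥0∞) * (2 * η) := by
          rw [Finset.sum_add_distrib, Finset.sum_const, Finset.card_range, nsmul_eq_mul]
  have hvB : ∑ i ∈ Finset.range n, edist (f (v (i + 1))) (f (v i)) ≤
      eVariationOn f (Icc b B) := eVariationOn.sum_le (f := f) (n := n) hvmono vs
  have hWle : W ≤ eVariationOn f (Icc b B) + ε / 2 := by
    have h1 : W - ε / 4 ≤ eVariationOn f (Icc b B) + (n : ℝ≥0∞) * (2 * η) :=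
      hS.le.trans (sumle.trans (add_le_add_left hvB _))
    have h2 : W ≤ eVariationOn f (Icc b B) + (n : ℝ≥0∞) * (2 * η) + ε / 4 :=
      tsub_le_iff_right.mp h1
    calc W ≤ eVariationOn f (Icc b B) + (n : ℝ≥0∞) * (2 * η) + ε / 4 := h2
      _ ≤ eVariationOn f (Icc b B) + ε / 4 + ε / 4 := by gcongr
      _ = eVariationOn f (Icc b B) + ε / 2 := by
          rw [add_assoc, quarter_add_quarter]
  have hsplit : eVariationOn f (Icc A b) + eVariationOn f (Icc b B) = W :=
    evar_Icc_add_Icc f hbmem.1.le hbmem.2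
  have hbBfin : eVariationOn f (Icc b B) ≠ ⊤ :=
    ne_top_of_le_ne_top hV (eVariationOn.mono f (Icc_subset_Icc hbmem.1.le le_rfl))
  have hfinal : eVariationOn f (Icc A b) ≤ ε / 2 := by
    have : eVariationOn f (Icc A b) + eVariationOn f (Icc b B) ≤
        ε / 2 + eVariationOn f (Icc b B) := by
      rw [hsplit, add_comm]; exact hWle
    exact (ENNReal.add_le_add_iff_right hbBfin).mp this
  exact ⟨b, hbmem, hfinal.trans_lt (ENNReal.half_lt_self hε.ne' hεt)⟩

private lemma evar_reflect (f : ℝ → X) (c : ℝ) (s : Set ℝ) :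
    eVariationOn (fun t => f (c - t)) s = eVariationOn f ((fun t => c - t) '' s) := by
  apply le_antisymm
  · exact eVariationOn.comp_le_of_antitoneOn f _
      (fun a _ b _ hab => sub_le_sub_left hab c) (mapsTo_image _ s)
  · have heq : EqOn ((fun t => f (c - t)) ∘ fun t => c - t) f ((fun t => c - t) '' s) :=
      fun z _ => by simp [sub_sub_cancel]
    rw [← eVariationOn.eq_of_eqOn heq]
    exact eVariationOn.comp_le_of_antitoneOn _ _
      (fun a _ b _ hab => sub_le_sub_left hab c)
      (by rintro _ ⟨z, hz, rfl⟩; simpa [sub_sub_cancel] using hz)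

private lemma evar_left_small (f : ℝ → X) {A B : ℝ} (hAB : A < B)
    (hf : ContinuousOn f (Icc A B)) (hV : eVariationOn f (Icc A B) ≠ ⊤)
    {ε : ℝ≥0∞} (hε : 0 < ε) (hεt : ε ≠ ⊤) :
    ∃ b ∈ Ico A B, eVariationOn f (Icc b B) < ε := by
  set g : ℝ → X := fun t => f (A + B - t) with hg
  have him : ∀ u v : ℝ, (fun t => A + B - t) '' Icc u v = Icc (A + B - v) (A + B - u) := by
    intro u v
    exact Set.image_const_sub_Icc _ _ _
  have hgev : ∀ u v : ℝ, eVariationOn g (Icc u v) =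
      eVariationOn f (Icc (A + B - v) (A + B - u)) := by
    intro u v; rw [evar_reflect f (A + B) (Icc u v), him]
  have hgc : ContinuousOn g (Icc A B) := by
    apply hf.comp (Continuous.continuousOn (by fun_prop))
    intro t ht
    constructor <;> [linarith [ht.2]; linarith [ht.1]]
  have hgV : eVariationOn g (Icc A B) ≠ ⊤ := by
    rw [hgev]
    simpa using hV
  obtain ⟨b', hb', hlt⟩ := evar_right_small g hAB hgc hgV hε hεt
  refine ⟨A + B - b', ⟨by linarith [hb'.2, hb'.1], by linarith [hb'.1]⟩, ?_⟩
  rw [hgev A b'] at hlt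
  simpa using hlt

private lemma exists_evar_eq (f : ℝ → X) (hf : ContinuousOn f (Icc 0 1))
    (hV : eVariationOn f (Icc 0 1) ≠ ⊤) {v : ℝ≥0∞} (hv : v ≤ eVariationOn f (Icc 0 1)) :
    ∃ t ∈ Icc (0:ℝ) 1, eVariationOn f (Icc 0 t) = v := by
  set g : ℝ → ℝ≥0∞ := fun t => eVariationOn f (Icc 0 t) with hg
  have gmono : ∀ a b : ℝ, a ≤ b → g a ≤ g b := fun a b h =>
    eVariationOn.mono f (Icc_subset_Icc le_rfl h)
  have hvt : v ≠ ⊤ := ne_top_of_le_ne_top hV hv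
  have g0 : g 0 = 0 := eVariationOn.subsingleton f (by simp [Set.Icc_self])
  set S := {t | t ∈ Icc (0:ℝ) 1 ∧ g t ≤ v} with hS
  have h0S : (0:ℝ) ∈ S := ⟨⟨le_rfl, zero_le_one⟩, by rw [g0]; exact zero_le⟩
  have hSbd : BddAbove S := ⟨1, fun t ht => ht.1.2⟩
  set b := sSup S with hbdef
  have hbmem : b ∈ Icc (0:ℝ) 1 :=
    ⟨le_csSup hSbd h0S, csSup_le ⟨0, h0S⟩ fun t ht => ht.1.2⟩
  have hfin : ∀ t : ℝ, t ≤ 1 → g t ≠ ⊤ := fun t ht =>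
    ne_top_of_le_ne_top hV (eVariationOn.mono f (Icc_subset_Icc le_rfl ht))
  have hadd : ∀ s t : ℝ, 0 ≤ s → s ≤ t → g s + eVariationOn f (Icc s t) = g t :=
    fun s t h0 hst => evar_Icc_add_Icc f h0 hst
  refine ⟨b, hbmem, le_antisymm ?_ ?_⟩
  · -- g b ≤ v
    by_contra hcon
    push_neg at hcon
    have hb0 : 0 < b := by
      rcases eq_or_lt_of_le hbmem.1 with h | h
      · exfalso
        have h2 : v < g 0 := by rw [h]; exact hcon
        rw [g0] at h2
        exact (zero_le : 0 ≤ v).not_gt h2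
      · exact h
    have hεpos : 0 < g b - v := tsub_pos_iff_lt.mpr hcon
    have hεt : g b - v ≠ ⊤ := ne_top_of_le_ne_top (hfin b hbmem.2) tsub_le_self
    obtain ⟨a, ha, hlt⟩ := evar_left_small f hb0
      (hf.mono (Icc_subset_Icc le_rfl hbmem.2))
      (hfin b hbmem.2) hεpos hεt
    have hba : b ≤ a := by
      apply csSup_le ⟨0, h0S⟩
      intro t ht
      by_contra hta
      push_neg at hta
      have htb : t ≤ b := le_csSup hSbd ht
      have h1 : eVariationOn f (Icc t b) ≤ eVariationOn f (Icc a b) :=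
        eVariationOn.mono f (Icc_subset_Icc hta.le le_rfl)
      have h2 : g b < g b := by
        calc g b = g t + eVariationOn f (Icc t b) := (hadd t b ht.1.1 htb).symm
          _ ≤ v + eVariationOn f (Icc t b) := add_le_add_left ht.2 _
          _ < v + (g b - v) := ENNReal.add_lt_add_left hvt (h1.trans_lt hlt)
          _ = g b := add_tsub_cancel_of_le hcon.le
      exact h2.false
    exact absurd hba (not_le.mpr ha.2)
  · -- v ≤ g b
    by_contra hcon
    push_neg at hcon
    have hb1 : b < 1 := by
      rcases lt_or_eq_of_le hbmem.2 with h | h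
      · exact h
      · exfalso; rw [h] at hcon; exact (hv.trans_lt hcon).false
    have hεpos : 0 < v - g b := tsub_pos_iff_lt.mpr hcon
    have hεt2 : v - g b ≠ ⊤ := ne_top_of_le_ne_top hvt tsub_le_self
    obtain ⟨t, ht, hlt⟩ := evar_right_small f hb1
      (hf.mono (Icc_subset_Icc hbmem.1 le_rfl))
      (ne_top_of_le_ne_top hV (eVariationOn.mono f (Icc_subset_Icc hbmem.1 le_rfl)))
      hεpos hεt2
    have htS : t ∈ S := by
      refine ⟨⟨hbmem.1.trans ht.1.le, ht.2⟩, ?_⟩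
      have : g t < v := by
        calc g t = g b + eVariationOn f (Icc b t) := (hadd b t hbmem.1 ht.1.le).symm
          _ < g b + (v - g b) := ENNReal.add_lt_add_left (hfin b hbmem.2) hlt
          _ = v := add_tsub_cancel_of_le hcon.le
      exact this.le
    exact absurd (le_csSup hSbd htS) (not_le.mpr ht.1)

private lemma image_mul_Icc {L a b : ℝ} (hL : 0 < L) (hab : a ≤ b) :
    (fun t => L * t) '' Icc a b = Icc (L * a) (L * b) :=
  Set.image_mul_left_Icc' hL a b

/-- Constant speed reparametrization of a rectifiable curve. -/
private lemma exists_constant_speed (f : ℝ → X) (hf : ContinuousOn f (Icc 0 1))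
    (hV : eVariationOn f (Icc 0 1) ≠ ⊤) (hV0 : eVariationOn f (Icc 0 1) ≠ 0) :
    ∃ σ : ℝ → X, ContinuousOn σ (Icc 0 1) ∧ σ 0 = f 0 ∧ σ 1 = f 1 ∧
      σ '' Icc 0 1 ⊆ f '' Icc 0 1 ∧
      ∀ a b : ℝ, 0 ≤ a → a ≤ b → b ≤ 1 →
        eVariationOn σ (Icc a b) =
          ENNReal.ofReal ((eVariationOn f (Icc 0 1)).toReal * (b - a)) := by
  set V := eVariationOn f (Icc 0 1) with hVdef
  set L := V.toReal with hLdef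
  have hL0 : 0 < L := ENNReal.toReal_pos hV0 hV
  have h0m : (0:ℝ) ∈ Icc (0:ℝ) 1 := ⟨le_rfl, zero_le_one⟩
  have h1m : (1:ℝ) ∈ Icc (0:ℝ) 1 := ⟨zero_le_one, le_rfl⟩
  have hlbv : LocallyBoundedVariationOn f (Icc 0 1) := fun a b _ _ =>
    ne_top_of_le_ne_top hV (eVariationOn.mono f inter_subset_left)
  set ρ : ℝ → ℝ := fun t => variationOnFromTo f (Icc 0 1) 0 t with hρdef
  have hρ_eq : ∀ t ∈ Icc (0:ℝ) 1, ρ t = (eVariationOn f (Icc 0 t)).toReal := by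
    intro t ht
    rw [hρdef]
    simp only
    rw [variationOnFromTo.eq_of_le f _ ht.1, show Icc (0:ℝ) 1 ∩ Icc 0 t = Icc 0 t from by
      rw [Icc_inter_Icc]; congr 1 <;> simp [ht.2]]
  have hsubfin : ∀ t : ℝ, t ≤ 1 → eVariationOn f (Icc 0 t) ≠ ⊤ := fun t ht =>
    ne_top_of_le_ne_top hV (eVariationOn.mono f (Icc_subset_Icc le_rfl ht))
  have himage : ρ '' Icc 0 1 = Icc 0 L := by
    apply Subset.antisymm
    · rintro _ ⟨t, ht, rfl⟩
      rw [hρ_eq t ht]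
      exact ⟨ENNReal.toReal_nonneg,
        ENNReal.toReal_mono hV (eVariationOn.mono f (Icc_subset_Icc le_rfl ht.2))⟩
    · rintro v ⟨hv0, hvL⟩
      obtain ⟨t, ht, hgt⟩ := exists_evar_eq f hf hV (v := ENNReal.ofReal v)
        (by rw [show eVariationOn f (Icc 0 1) = V from rfl, ← ENNReal.ofReal_toReal hV]
            exact ENNReal.ofReal_le_ofReal hvL)
      exact ⟨t, ht, by rw [hρ_eq t ht, hgt, ENNReal.toReal_ofReal hv0]⟩
  set τ : ℝ → X := naturalParameterization f (Icc 0 1) 0 with hτdef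
  have hus : HasConstantSpeedOnWith τ (Icc 0 L) 1 := by
    have h := has_unit_speed_naturalParameterization f hlbv h0m
    rw [HasUnitSpeedOn] at h
    rwa [show variationOnFromTo f (Icc 0 1) 0 '' Icc 0 1 = Icc 0 L from himage] at h
  have hτf : ∀ t ∈ Icc (0:ℝ) 1, τ (ρ t) = f t := by
    intro t ht
    have := edist_naturalParameterization_eq_zero hlbv h0m ht
    rw [edist_eq_zero] at this
    exact this
  have hρ0 : ρ 0 = 0 := variationOnFromTo.self f _ 0
  have hρ1 : ρ 1 = L := by rw [hρ_eq 1 h1m]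
  have hτvar : ∀ s t : ℝ, 0 ≤ s → s ≤ t → t ≤ L →
      eVariationOn τ (Icc s t) = ENNReal.ofReal (t - s) := by
    intro s t h0 hst htL
    have h := hus (x := s) ⟨h0, hst.trans htL⟩ (y := t) ⟨h0.trans hst, htL⟩
    rwa [inter_eq_self_of_subset_right (Icc_subset_Icc h0 htL), NNReal.coe_one, one_mul] at h
  set σ : ℝ → X := fun t => τ (L * t) with hσdef
  have hmono : ∀ a b : ℝ, MonotoneOn (fun t => L * t) (Icc a b) :=
    fun a b u _ v _ huv => mul_le_mul_of_nonneg_left huv hL0.le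
  have hσvar : ∀ a b : ℝ, 0 ≤ a → a ≤ b → b ≤ 1 →
      eVariationOn σ (Icc a b) = ENNReal.ofReal (L * (b - a)) := by
    intro a b h0 hab hb1
    have hcomp : eVariationOn (τ ∘ fun t => L * t) (Icc a b) =
        eVariationOn τ (Icc (L * a) (L * b)) := by
      rw [eVariationOn.comp_eq_of_monotoneOn τ _ (hmono a b), image_mul_Icc hL0 hab]
    have : eVariationOn σ (Icc a b) = eVariationOn τ (Icc (L * a) (L * b)) := hcomp
    rw [this, hτvar (L * a) (L * b) (mul_nonneg hL0.le h0)
      (mul_le_mul_of_nonneg_left hab hL0.le) (by nlinarith)]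
    ring_nf
  have hσ0 : σ 0 = f 0 := by
    have h := hτf 0 h0m
    rw [hρ0] at h
    simpa [hσdef] using h
  have hσ1 : σ 1 = f 1 := by
    have h := hτf 1 h1m
    rw [hρ1] at h
    simpa [hσdef] using h
  have hσim : σ '' Icc 0 1 ⊆ f '' Icc 0 1 := by
    rintro _ ⟨t, ht, rfl⟩
    have hLt : L * t ∈ Icc 0 L := ⟨mul_nonneg hL0.le ht.1, by nlinarith [ht.2]⟩
    rw [← himage] at hLt
    obtain ⟨s, hs, hst⟩ := hLt
    exact ⟨s, hs, by rw [← hτf s hs, hst]⟩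
  have hσcont : ContinuousOn σ (Icc 0 1) := by
    have hlip : LipschitzOnWith (Real.toNNReal L) σ (Icc 0 1) := by
      intro u hu v hv
      rcases le_total u v with h | h
      · have h1 : edist (σ u) (σ v) ≤ eVariationOn σ (Icc u v) :=
          eVariationOn.edist_le σ (x := u) (y := v) ⟨le_rfl, h⟩ ⟨h, le_rfl⟩
        rw [hσvar u v hu.1 h hv.2] at h1
        refine h1.trans ?_
        rw [edist_dist, Real.dist_eq, abs_of_nonpos (by linarith), show (↑(Real.toNNReal L) : ℝ≥0∞) = ENNReal.ofReal L from rfl, ← ENNReal.ofReal_mul hL0.le]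
        all_goals exact ENNReal.ofReal_le_ofReal (by nlinarith)
      · have h1 : edist (σ u) (σ v) ≤ eVariationOn σ (Icc v u) :=
          eVariationOn.edist_le σ (x := u) (y := v) ⟨h, le_rfl⟩ ⟨le_rfl, h⟩
        rw [hσvar v u hv.1 h hu.2] at h1
        refine h1.trans ?_
        rw [edist_dist, Real.dist_eq, abs_of_nonneg (by linarith), show (↑(Real.toNNReal L) : ℝ≥0∞) = ENNReal.ofReal L from rfl, ← ENNReal.ofReal_mul hL0.le]
        all_goals exact ENNReal.ofReal_le_ofReal (by nlinarith)
    exact hlip.continuousOn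
  exact ⟨σ, hσcont, hσ0, hσ1, hσim, hσvar⟩

/-- Two injective parameterizations of the same arc with the same endpoints have
the same variation. -/
private lemma evar_eq_of_same_arc {η₁ η₂ : ℝ → X} {x y : X}
    (h₁ : IsCurveOn η₁ x y) (h₂ : IsCurveOn η₂ x y)
    (hi₁ : InjOn η₁ (Icc 0 1)) (hi₂ : InjOn η₂ (Icc 0 1))
    (him : η₁ '' Icc 0 1 = η₂ '' Icc 0 1) :
    eVariationOn η₁ (Icc 0 1) = eVariationOn η₂ (Icc 0 1) := by
  haveI : Nonempty ℝ := inferInstance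
  have h0m : (0:ℝ) ∈ Icc (0:ℝ) 1 := ⟨le_rfl, zero_le_one⟩
  have h1m : (1:ℝ) ∈ Icc (0:ℝ) 1 := ⟨zero_le_one, le_rfl⟩
  set φ : ℝ → ℝ := fun t => Function.invFunOn η₂ (Icc 0 1) (η₁ t) with hφdef
  have hmem : ∀ t ∈ Icc (0:ℝ) 1, φ t ∈ Icc (0:ℝ) 1 ∧ η₂ (φ t) = η₁ t := by
    intro t ht
    have : η₁ t ∈ η₂ '' Icc 0 1 := him ▸ mem_image_of_mem η₁ ht
    obtain ⟨s, hs, hst⟩ := this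
    exact ⟨Function.invFunOn_mem ⟨s, hs, hst⟩, Function.invFunOn_eq ⟨s, hs, hst⟩⟩
  have hφ0 : φ 0 = 0 := by
    apply hi₂ (hmem 0 h0m).1 h0m
    rw [(hmem 0 h0m).2, h₁.2.1, h₂.2.1]
  have hφ1 : φ 1 = 1 := by
    apply hi₂ (hmem 1 h1m).1 h1m
    rw [(hmem 1 h1m).2, h₁.2.2, h₂.2.2]
  have hφinj : InjOn φ (Icc 0 1) := by
    intro a ha b hb hab
    apply hi₁ ha hb
    rw [← (hmem a ha).2, ← (hmem b hb).2, hab]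
  -- continuity of φ on Icc 0 1
  haveI : CompactSpace ↥(Icc (0:ℝ) 1) := isCompact_iff_compactSpace.mp isCompact_Icc
  have hφcont : ContinuousOn φ (Icc 0 1) := by
    rw [continuousOn_iff_continuous_restrict]
    set g₂ : ↥(Icc (0:ℝ) 1) → X := (Icc (0:ℝ) 1).restrict η₂ with hg₂
    have hg₂c : Continuous g₂ := continuousOn_iff_continuous_restrict.mp h₂.1
    have hg₂i : Function.Injective g₂ := hi₂.injective
    have hemb := hg₂c.isClosedEmbedding hg₂i
    set φ' : ↥(Icc (0:ℝ) 1) → ↥(Icc (0:ℝ) 1) := fun t => ⟨φ ↑t, (hmem ↑t t.2).1⟩ with hφ'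
    have hcomp : g₂ ∘ φ' = (Icc (0:ℝ) 1).restrict η₁ := by
      funext t
      exact (hmem ↑t t.2).2
    have hφ'c : Continuous φ' := by
      rw [hemb.isEmbedding.continuous_iff, hcomp]
      exact continuousOn_iff_continuous_restrict.mp h₁.1
    exact (continuous_subtype_val.comp hφ'c : _)
  have hφmono : MonotoneOn φ (Icc 0 1) := by
    have := ContinuousOn.strictMonoOn_of_injOn_Icc (zero_le_one)
      (by rw [hφ0, hφ1]; exact zero_le_one) hφcont hφinj
    exact this.monotoneOn
  have hφim : φ '' Icc 0 1 = Icc 0 1 := by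
    apply Subset.antisymm
    · rintro _ ⟨t, ht, rfl⟩; exact (hmem t ht).1
    · intro s hs
      have : η₂ s ∈ η₁ '' Icc 0 1 := him.symm ▸ mem_image_of_mem η₂ hs
      obtain ⟨t, ht, hts⟩ := this
      refine ⟨t, ht, hi₂ (hmem t ht).1 hs ?_⟩
      rw [(hmem t ht).2, hts]
  calc eVariationOn η₁ (Icc 0 1) = eVariationOn (η₂ ∘ φ) (Icc 0 1) := by
        apply eVariationOn.eq_of_eqOn
        intro t ht
        exact ((hmem t ht).2).symm
    _ = eVariationOn η₂ (φ '' Icc 0 1) := eVariationOn.comp_eq_of_monotoneOn η₂ φ hφmono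
    _ = eVariationOn η₂ (Icc 0 1) := by rw [hφim]

/-- Minimum of a lower semicontinuous `ℝ≥0∞`-valued function on a compact set. -/
private lemma exists_min_of_lsc {Y : Type*} [TopologicalSpace Y] [T2Space Y] {K : Set Y}
    (hK : IsCompact K) (hne : K.Nonempty) {Φ : Y → ℝ≥0∞} (hΦ : LowerSemicontinuous Φ) :
    ∃ F ∈ K, ∀ G ∈ K, Φ F ≤ Φ G := by
  set c := sInf (Φ '' K) with hc
  by_cases htop : c = ⊤
  · obtain ⟨F, hF⟩ := hne
    refine ⟨F, hF, fun G hG => ?_⟩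
    have : (⊤ : ℝ≥0∞) ≤ Φ G := htop ▸ sInf_le ⟨G, hG, rfl⟩
    simpa using top_unique this ▸ le_top
  · have hlt : c < ⊤ := lt_top_iff_ne_top.mpr htop
    haveI : Nonempty ↥(Ioi c) := ⟨⟨⊤, hlt⟩⟩
    have hne' : ∀ r : ↥(Ioi c), (K ∩ Φ ⁻¹' Iic ↑r).Nonempty := by
      rintro ⟨r, hr⟩
      obtain ⟨_, ⟨G, hG, rfl⟩, hGr⟩ := sInf_lt_iff.mp (show sInf (Φ '' K) < r from hr)
      exact ⟨G, hG, hGr.le⟩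
    have hdir : Directed (· ⊇ ·) fun r : ↥(Ioi c) => K ∩ Φ ⁻¹' Iic ↑r := by
      rintro ⟨r, hr⟩ ⟨s, hs⟩
      refine ⟨⟨min r s, mem_Ioi.mpr (lt_min hr hs)⟩, ?_, ?_⟩
      · exact inter_subset_inter_right _ (preimage_mono (Iic_subset_Iic.mpr (min_le_left _ _)))
      · exact inter_subset_inter_right _ (preimage_mono (Iic_subset_Iic.mpr (min_le_right _ _)))
    obtain ⟨F, hF⟩ := IsCompact.nonempty_iInter_of_directed_nonempty_isCompact_isClosed
      (fun r : ↥(Ioi c) => K ∩ Φ ⁻¹' Iic ↑r) hdir hne'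
      (fun r => hK.inter_right (hΦ.isClosed_preimage _))
      (fun r => hK.isClosed.inter (hΦ.isClosed_preimage _))
    simp only [mem_iInter] at hF
    have hFK : F ∈ K := (hF ⟨⊤, hlt⟩).1
    refine ⟨F, hFK, fun G hG => ?_⟩
    have hFc : Φ F ≤ c := by
      by_contra hcon
      push_neg at hcon
      obtain ⟨r, hr1, hr2⟩ := exists_between hcon
      exact absurd ((hF ⟨r, hr1⟩).2 : Φ F ≤ r) (not_le.mpr hr2)
    exact hFc.trans (sInf_le ⟨G, hG, rfl⟩)

private lemma evar_restrict_eq (f : ℝ → X) :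
    eVariationOn (fun t : ↥(Icc (0:ℝ) 1) => f ↑t) univ = eVariationOn f (Icc 0 1) := by
  have hm : MonotoneOn (Subtype.val : ↥(Icc (0:ℝ) 1) → ℝ) univ := fun a _ b _ h => h
  rw [show (fun t : ↥(Icc (0:ℝ) 1) => f ↑t) = f ∘ Subtype.val from rfl,
    eVariationOn.comp_eq_of_monotoneOn f _ hm, image_univ, Subtype.range_coe]

set_option maxHeartbeats 1000000 in
/-- From any rectifiable curve joining two distinct points one can extract an injective
rectifiable curve of no greater length. -/
private lemma exists_inj_curve {x y : X} (hxy : x ≠ y) {g : ℝ → X}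
    (hg : IsCurveOn g x y) {W : ℝ≥0∞} (hWeq : eVariationOn g (Icc 0 1) = W) (hWt : W ≠ ⊤) :
    ∃ σ : ℝ → X, IsCurveOn σ x y ∧ InjOn σ (Icc 0 1) ∧ eVariationOn σ (Icc 0 1) ≤ W := by
  obtain ⟨hgc, hg0, hg1⟩ := hg
  have h0m : (0:ℝ) ∈ Icc (0:ℝ) 1 := ⟨le_rfl, zero_le_one⟩
  have h1m : (1:ℝ) ∈ Icc (0:ℝ) 1 := ⟨zero_le_one, le_rfl⟩
  have hd0 : 0 < edist x y := edist_pos.mpr hxy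
  have hW0 : W ≠ 0 := by
    intro h
    have h2 := eVariationOn.edist_le g h0m h1m
    rw [hg0, hg1, hWeq, h] at h2
    exact hd0.not_ge h2
  obtain ⟨σ₀, hσ₀c, hσ₀0, hσ₀1, hσ₀im, hσ₀var⟩ :=
    exists_constant_speed g hgc (hWeq ▸ hWt) (hWeq ▸ hW0)
  rw [hWeq] at hσ₀var
  set M := W.toReal with hM
  have hM0 : 0 < M := ENNReal.toReal_pos hW0 hWt
  set K : Set X := g '' Icc 0 1 with hKdef
  have hKcomp : IsCompact K := isCompact_Icc.image_of_continuousOn hgc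
  haveI : CompactSpace ↥(Icc (0:ℝ) 1) := isCompact_iff_compactSpace.mp isCompact_Icc
  set Φ : (↥(Icc (0:ℝ) 1) →ᵇ X) → ℝ≥0∞ :=
    fun F => eVariationOn (fun t : ↥(Icc (0:ℝ) 1) => F t) univ with hΦdef
  have hΦlsc : LowerSemicontinuous Φ := by
    intro F v hv
    exact eVariationOn.lowerSemicontinuous_aux
      (F := fun (G : ↥(Icc (0:ℝ) 1) →ᵇ X) (t : ↥(Icc (0:ℝ) 1)) => G t) (p := nhds F)
      (fun t _ => (continuous_eval_const t).tendsto F) hv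
  set A : Set (↥(Icc (0:ℝ) 1) →ᵇ X) :=
    {F | LipschitzWith (Real.toNNReal M) F ∧ (∀ t, F t ∈ K) ∧
      F ⟨0, h0m⟩ = x ∧ F ⟨1, h1m⟩ = y} with hAdef
  have hAclosed : IsClosed A := by
    rw [hAdef, setOf_and, setOf_and, setOf_and]
    refine IsClosed.inter ?_ (IsClosed.inter ?_ (IsClosed.inter ?_ ?_))
    · have hrw : {F : ↥(Icc (0:ℝ) 1) →ᵇ X | LipschitzWith (Real.toNNReal M) F} =
          ⋂ (u) (v), {F : ↥(Icc (0:ℝ) 1) →ᵇ X |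
            edist (F u) (F v) ≤ (Real.toNNReal M : ℝ≥0∞) * edist u v} := by
        ext F
        simp only [mem_setOf_eq, mem_iInter]
        exact ⟨fun h u v => h u v, fun h u v => h u v⟩
      rw [hrw]
      refine isClosed_iInter fun u => isClosed_iInter fun v => ?_
      exact isClosed_le ((continuous_eval_const u).edist
        (continuous_eval_const v)) continuous_const
    · have hrw : {F : ↥(Icc (0:ℝ) 1) →ᵇ X | ∀ t, F t ∈ K} =
          ⋂ t, (fun F : ↥(Icc (0:ℝ) 1) →ᵇ X => F t) ⁻¹' K := by
        ext F; simp [mem_iInter]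
      rw [hrw]
      exact isClosed_iInter fun t =>
        hKcomp.isClosed.preimage (continuous_eval_const t)
    · exact isClosed_eq (continuous_eval_const _) continuous_const
    · exact isClosed_eq (continuous_eval_const _) continuous_const
  have hequi : Equicontinuous ((↑) : A → ↥(Icc (0:ℝ) 1) → X) := by
    apply Metric.equicontinuous_of_continuity_modulus (fun t => M * t)
    · simpa using (continuous_mul_left M).tendsto (0:ℝ)
    · intro u v F
      have h2 := F.2.1.dist_le_mul u v
      rwa [Real.coe_toNNReal M hM0.le] at h2
  have hAcomp : IsCompact A := BoundedContinuousFunction.arzela_ascoli₂ K hKcomp A hAclosed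
    (fun F t hF => hF.2.1 t) hequi
  -- F₀ from σ₀
  have hσ₀lip : LipschitzWith (Real.toNNReal M) ((Icc (0:ℝ) 1).restrict σ₀) := by
    intro u v
    have key : ∀ a b : ↥(Icc (0:ℝ) 1), (a:ℝ) ≤ b →
        edist (σ₀ ↑a) (σ₀ ↑b) ≤ (Real.toNNReal M : ℝ≥0∞) * edist a b := by
      intro a b hab
      have h1 : edist (σ₀ ↑a) (σ₀ ↑b) ≤ eVariationOn σ₀ (Icc (a:ℝ) b) :=
        eVariationOn.edist_le σ₀ ⟨le_rfl, hab⟩ ⟨hab, le_rfl⟩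
      rw [hσ₀var a b a.2.1 hab b.2.2] at h1
      refine h1.trans ?_
      rw [Subtype.edist_eq, edist_dist, Real.dist_eq, abs_of_nonpos (by linarith),
        show ((Real.toNNReal M : ℝ≥0∞)) = ENNReal.ofReal M from rfl,
        ← ENNReal.ofReal_mul hM0.le]
      exact ENNReal.ofReal_le_ofReal (le_of_eq (by rw [hM]; ring))
    rcases le_total (u:ℝ) v with h | h
    · exact key u v h
    · have h2 := key v u h
      rwa [edist_comm (σ₀ ↑v), edist_comm v u] at h2
  set F₀ : ↥(Icc (0:ℝ) 1) →ᵇ X := BoundedContinuousFunction.mkOfCompact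
    ⟨(Icc (0:ℝ) 1).restrict σ₀, continuousOn_iff_continuous_restrict.mp hσ₀c⟩ with hF₀def
  have hF₀A : F₀ ∈ A := by
    refine ⟨hσ₀lip, fun t => hKdef ▸ hσ₀im (mem_image_of_mem σ₀ t.2), ?_, ?_⟩
    · show σ₀ 0 = x; rw [hσ₀0, hg0]
    · show σ₀ 1 = y; rw [hσ₀1, hg1]
  obtain ⟨Fm, hFmA, hFmmin⟩ := exists_min_of_lsc hAcomp ⟨F₀, hF₀A⟩ hΦlsc
  set c := Φ Fm with hcdef
  set fs : ℝ → X := fun t => Fm (projIcc 0 1 zero_le_one t) with hfsdef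
  have hfscont : Continuous fs := Fm.continuous.comp continuous_projIcc
  have hfsvar : eVariationOn fs (Icc 0 1) = c := by
    rw [← evar_restrict_eq fs]
    congr 1
    funext t
    simp [hfsdef, projIcc_val]
  have hfs0 : fs 0 = x := by
    show Fm (projIcc 0 1 zero_le_one 0) = x
    rw [projIcc_left]
    exact hFmA.2.2.1
  have hfs1 : fs 1 = y := by
    show Fm (projIcc 0 1 zero_le_one 1) = y
    rw [projIcc_right]
    exact hFmA.2.2.2
  have hcleW : c ≤ W := by
    have h1 : Φ F₀ = eVariationOn σ₀ (Icc 0 1) := evar_restrict_eq σ₀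
    have h2 : eVariationOn σ₀ (Icc 0 1) = W := by
      rw [hσ₀var 0 1 le_rfl zero_le_one le_rfl, sub_zero, mul_one, hM,
        ENNReal.ofReal_toReal hWt]
    exact (hFmmin F₀ hF₀A).trans (h1.trans h2).le
  have hct : c ≠ ⊤ := ne_top_of_le_ne_top hWt hcleW
  have hc0 : 0 < c := by
    have h2 := eVariationOn.edist_le fs h0m h1m
    rw [hfs0, hfs1, hfsvar] at h2
    exact hd0.trans_le h2
  obtain ⟨σ, hσc, hσfs0, hσfs1, hσim, hσvar⟩ := exists_constant_speed fs
    hfscont.continuousOn (by rw [hfsvar]; exact hct) (by rw [hfsvar]; exact hc0.ne')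
  rw [hfsvar] at hσvar
  have hσx : σ 0 = x := hσfs0.trans hfs0
  have hσy : σ 1 = y := hσfs1.trans hfs1
  set ℓ := c.toReal with hℓdef
  have hℓ0 : 0 < ℓ := ENNReal.toReal_pos hc0.ne' hct
  have hℓM : ℓ ≤ M := ENNReal.toReal_mono hWt hcleW
  have hσK : ∀ t ∈ Icc (0:ℝ) 1, σ t ∈ K := by
    intro t ht
    obtain ⟨s, hs, hst⟩ := hσim (mem_image_of_mem σ ht)
    rw [← hst]
    exact hFmA.2.1 _
  have hσevar : eVariationOn σ (Icc 0 1) = c := by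
    rw [hσvar 0 1 le_rfl zero_le_one le_rfl, sub_zero, mul_one, hℓdef,
      ENNReal.ofReal_toReal hct]
  -- injectivity of σ
  have haux : ∀ a b : ℝ, a ∈ Icc (0:ℝ) 1 → b ∈ Icc (0:ℝ) 1 → a < b → σ a ≠ σ b := by
    intro a b ha hb hab heq
    set e := b - a with hedef
    have he0 : 0 < e := by simp only [hedef]; linarith
    set D := 1 - e with hDdef
    have hD0 : 0 ≤ D := by simp only [hDdef, hedef]; linarith [ha.1, hb.2]
    have haD : a ≤ D := by simp only [hDdef, hedef]; linarith [hb.2]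
    have hDe1 : D + e = 1 := by simp only [hDdef]; ring
    have hDpos : 0 < D := by
      rcases lt_or_eq_of_le hD0 with h | h
      · exact h
      · exfalso
        have ha0 : a = 0 := by simp only [hDdef, hedef] at h; linarith [ha.1, hb.2]
        have hb1 : b = 1 := by simp only [hDdef, hedef] at h; linarith [ha.1, hb.2]
        apply hxy
        calc x = σ a := by rw [ha0, hσx]
          _ = σ b := heq
          _ = y := by rw [hb1, hσy]
    set φ : ℝ → ℝ := fun t => if D * t ≤ a then D * t else D * t + e with hφdef
    have hφmaps : ∀ t ∈ Icc (0:ℝ) 1, φ t ∈ Icc (0:ℝ) 1 := by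
      intro t ht
      by_cases hcase : D * t ≤ a
      · simp only [hφdef, if_pos hcase]
        exact ⟨mul_nonneg hD0 ht.1, hcase.trans ha.2⟩
      · simp only [hφdef, if_neg hcase]
        push_neg at hcase
        have h1 : D * t ≤ D := by nlinarith [ht.2]
        exact ⟨by nlinarith [ht.1], by linarith⟩
    set q : ℝ → X := fun t => σ (φ t) with hqdef
    have hbound : ∀ u v : ℝ, u ∈ Icc (0:ℝ) 1 → v ∈ Icc (0:ℝ) 1 → u ≤ v →
        edist (q u) (q v) ≤ ENNReal.ofReal (ℓ * (D * v - D * u)) := by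
      intro u v hu hv huv
      have hDu : 0 ≤ D * u := mul_nonneg hD0 hu.1
      have hDuv : D * u ≤ D * v := by nlinarith
      have hDv1 : D * v ≤ D := by nlinarith [hv.2]
      by_cases h1 : D * u ≤ a
      · by_cases h2 : D * v ≤ a
        · simp only [hqdef, hφdef, if_pos h1, if_pos h2]
          have h3 := eVariationOn.edist_le σ (x := D*u) (y := D*v)
            (Set.left_mem_Icc.mpr hDuv) (Set.right_mem_Icc.mpr hDuv)
          refine h3.trans ?_
          rw [hσvar (D*u) (D*v) hDu hDuv (h2.trans ha.2)]
        · push_neg at h2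
          simp only [hqdef, hφdef, if_pos h1, if_neg (not_le.mpr h2)]
          have hbv : b ≤ D * v + e := by simp only [hedef]; linarith
          have hvle : D * v + e ≤ 1 := by linarith
          have hD1 : edist (σ (D*u)) (σ a) ≤ ENNReal.ofReal (ℓ * (a - D*u)) := by
            have h3 := eVariationOn.edist_le σ (x := D*u) (y := a)
              (Set.left_mem_Icc.mpr h1) (Set.right_mem_Icc.mpr h1)
            refine h3.trans ?_
            rw [hσvar (D*u) a hDu h1 ha.2]
          have hD2 : edist (σ b) (σ (D*v + e)) ≤ ENNReal.ofReal (ℓ * ((D*v + e) - b)) := by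
            have h3 := eVariationOn.edist_le σ (x := b) (y := D*v+e)
              (Set.left_mem_Icc.mpr hbv) (Set.right_mem_Icc.mpr hbv)
            refine h3.trans ?_
            rw [hσvar b (D*v+e) (by linarith [ha.1, hab]) hbv hvle]
          calc edist (σ (D*u)) (σ (D*v + e))
              ≤ edist (σ (D*u)) (σ a) + edist (σ a) (σ (D*v + e)) := edist_triangle _ _ _
            _ = edist (σ (D*u)) (σ a) + edist (σ b) (σ (D*v + e)) := by rw [heq]
            _ ≤ ENNReal.ofReal (ℓ * (a - D*u)) + ENNReal.ofReal (ℓ * ((D*v + e) - b)) :=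
                add_le_add hD1 hD2
            _ = ENNReal.ofReal (ℓ * (D * v - D * u)) := by
                rw [← ENNReal.ofReal_add (by nlinarith) (by nlinarith)]
                congr 1
                simp only [hedef]
                ring
      · push_neg at h1
        have h2 : ¬ (D * v ≤ a) := by push_neg; linarith
        simp only [hqdef, hφdef, if_neg (not_le.mpr h1), if_neg h2]
        have hble : D * v + e ≤ 1 := by linarith
        have h0le : 0 ≤ D * u + e := by linarith
        have h3 := eVariationOn.edist_le σ (x := D*u+e) (y := D*v+e)
          (Set.left_mem_Icc.mpr (by linarith)) (Set.right_mem_Icc.mpr (by linarith))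
        refine h3.trans ?_
        rw [hσvar (D*u+e) (D*v+e) h0le (by linarith) hble]
        exact le_of_eq (by congr 1; ring)
    have hq_edist : ∀ u v : ℝ, u ∈ Icc (0:ℝ) 1 → v ∈ Icc (0:ℝ) 1 →
        edist (q u) (q v) ≤ ENNReal.ofReal (M * |v - u|) := by
      intro u v hu hv
      have hDD : D ≤ 1 := by simp only [hDdef]; linarith
      rcases le_total u v with hle | hle
      · refine (hbound u v hu hv hle).trans (ENNReal.ofReal_le_ofReal ?_)
        rw [abs_of_nonneg (by linarith)]
        calc ℓ * (D * v - D * u) = (ℓ * D) * (v - u) := by ring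
          _ ≤ (M * 1) * (v - u) := by
              apply mul_le_mul_of_nonneg_right _ (by linarith)
              nlinarith
          _ = M * (v - u) := by ring
      · rw [edist_comm]
        refine (hbound v u hv hu hle).trans (ENNReal.ofReal_le_ofReal ?_)
        rw [abs_of_nonpos (by linarith)]
        calc ℓ * (D * u - D * v) = (ℓ * D) * (u - v) := by ring
          _ ≤ (M * 1) * (u - v) := by
              apply mul_le_mul_of_nonneg_right _ (by linarith)
              nlinarith
          _ = M * -(v - u) := by ring
    have hqcont : ContinuousOn q (Icc 0 1) := by
      have hlip : LipschitzOnWith (Real.toNNReal M) q (Icc 0 1) := by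
        intro u hu v hv
        refine (hq_edist u v hu hv).trans ?_
        rw [edist_dist, Real.dist_eq,
          show ((Real.toNNReal M : ℝ≥0∞)) = ENNReal.ofReal M from rfl,
          ← ENNReal.ofReal_mul hM0.le]
        exact ENNReal.ofReal_le_ofReal (le_of_eq (by rw [abs_sub_comm]))
      exact hlip.continuousOn
    -- variation of q
    set tstar := a / D with htsdef
    have htsmem : tstar ∈ Icc (0:ℝ) 1 :=
      ⟨div_nonneg ha.1 hD0, by rw [htsdef, div_le_one hDpos]; exact haD⟩
    have hDts : D * tstar = a := by
      rw [htsdef, mul_comm, div_mul_cancel₀ _ hDpos.ne']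
    have hq1 : eVariationOn q (Icc 0 tstar) = eVariationOn σ (Icc 0 a) := by
      have heqon : EqOn q (σ ∘ fun t => D * t) (Icc 0 tstar) := by
        intro t ht
        have h1 : D * t ≤ a := by
          calc D * t ≤ D * tstar := by nlinarith [ht.2]
            _ = a := hDts
        simp only [hqdef, hφdef, Function.comp_apply, if_pos h1]
      rw [eVariationOn.eq_of_eqOn heqon,
        eVariationOn.comp_eq_of_monotoneOn σ _
          (fun u _ v _ huv => mul_le_mul_of_nonneg_left huv hD0),
        image_mul_Icc hDpos htsmem.1, mul_zero, hDts]
    have hq2 : eVariationOn q (Icc tstar 1) = eVariationOn σ (Icc b 1) := by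
      set ψ : ℝ → ℝ := fun t => max b (D * t + e) with hψdef
      have heqon : EqOn q (σ ∘ ψ) (Icc tstar 1) := by
        intro t ht
        by_cases hcase : D * t ≤ a
        · have hta : D * t = a := le_antisymm hcase (by rw [← hDts]; nlinarith [ht.1])
          have hψt : ψ t = b := by
            simp only [hψdef, hta]
            rw [show a + e = b by simp only [hedef]; ring, max_self]
          simp only [hqdef, hφdef, Function.comp_apply, hta, hψt]
          rw [if_pos le_rfl, heq]
        · push_neg at hcase
          have hψt : ψ t = D * t + e := max_eq_right (by simp only [hedef]; linarith)
          simp only [hqdef, hφdef, Function.comp_apply, if_neg (not_le.mpr hcase), hψt]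
      have hψmono : MonotoneOn ψ (Icc tstar 1) := fun u _ v _ huv =>
        max_le_max le_rfl (by nlinarith)
      have hψim : ψ '' Icc tstar 1 = Icc b 1 := by
        apply Subset.antisymm
        · rintro _ ⟨t, ht, rfl⟩
          refine ⟨le_max_left _ _, max_le hb.2 ?_⟩
          nlinarith [ht.2]
        · intro z hz
          rcases eq_or_lt_of_le hz.1 with hzb | hzb
          · refine ⟨tstar, ⟨le_rfl, htsmem.2⟩, ?_⟩
            simp only [hψdef, hDts]
            rw [show a + e = b by simp only [hedef]; ring, max_self, ← hzb]
          · refine ⟨(z - e) / D, ⟨?_, ?_⟩, ?_⟩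
            · rw [htsdef]
              have haz : a ≤ z - e := by simp only [hedef]; linarith [hzb.le]
              gcongr
            · rw [div_le_one hDpos]
              simp only [hedef]
              linarith [hz.2]
            · simp only [hψdef]
              rw [mul_comm, div_mul_cancel₀ _ hDpos.ne']
              rw [max_eq_right (by linarith [hz.1])]
              ring
      rw [eVariationOn.eq_of_eqOn heqon,
        eVariationOn.comp_eq_of_monotoneOn σ _ hψmono, hψim]
    have hqtotal : eVariationOn q (Icc 0 1) =
        eVariationOn σ (Icc 0 a) + eVariationOn σ (Icc b 1) := by
      rw [← evar_Icc_add_Icc q htsmem.1 htsmem.2, hq1, hq2]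
    have hmiddle : eVariationOn σ (Icc a b) = ENNReal.ofReal (ℓ * e) := by
      rw [hσvar a b ha.1 hab.le hb.2]
    have hdecomp : eVariationOn σ (Icc 0 a) + eVariationOn σ (Icc a b) +
        eVariationOn σ (Icc b 1) = c := by
      rw [evar_Icc_add_Icc σ ha.1 hab.le, evar_Icc_add_Icc σ (ha.1.trans hab.le) hb.2, hσevar]
    have hqlt : eVariationOn q (Icc 0 1) < c := by
      rw [hqtotal, ← hdecomp]
      have hB0 : eVariationOn σ (Icc a b) ≠ 0 := by
        rw [hmiddle]
        simp only [ne_eq, ENNReal.ofReal_eq_zero, not_le]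
        nlinarith
      have hfin : eVariationOn σ (Icc 0 a) + eVariationOn σ (Icc b 1) ≠ ⊤ := by
        apply ENNReal.add_ne_top.mpr
        constructor <;>
          exact ne_top_of_le_ne_top (hσevar ▸ hct)
            (eVariationOn.mono σ (Icc_subset_Icc (by linarith [ha.1]) (by linarith [hb.2])))
      calc eVariationOn σ (Icc 0 a) + eVariationOn σ (Icc b 1)
          < eVariationOn σ (Icc 0 a) + eVariationOn σ (Icc b 1) +
            eVariationOn σ (Icc a b) := ENNReal.lt_add_right hfin hB0
        _ = eVariationOn σ (Icc 0 a) + eVariationOn σ (Icc a b) +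
            eVariationOn σ (Icc b 1) := by ring
    -- q as an element of A
    have hqlip : LipschitzWith (Real.toNNReal M) ((Icc (0:ℝ) 1).restrict q) := by
      intro u v
      refine (hq_edist ↑u ↑v u.2 v.2).trans ?_
      rw [Subtype.edist_eq, edist_dist, Real.dist_eq,
        show ((Real.toNNReal M : ℝ≥0∞)) = ENNReal.ofReal M from rfl,
        ← ENNReal.ofReal_mul hM0.le]
      exact ENNReal.ofReal_le_ofReal (le_of_eq (by rw [abs_sub_comm]))
    set Fq : ↥(Icc (0:ℝ) 1) →ᵇ X := BoundedContinuousFunction.mkOfCompact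
      ⟨(Icc (0:ℝ) 1).restrict q, continuousOn_iff_continuous_restrict.mp hqcont⟩ with hFqdef
    have hFqA : Fq ∈ A := by
      refine ⟨hqlip, fun t => hσK _ (hφmaps _ t.2), ?_, ?_⟩
      · show q 0 = x
        have hφ0 : φ 0 = 0 := by simp only [hφdef, mul_zero, if_pos ha.1]
        simp only [hqdef, hφ0, hσx]
      · show q 1 = y
        by_cases hcase : D * 1 ≤ a
        · have hDa : D = a := le_antisymm (by linarith) haD
          have hb1 : b = 1 := by simp only [hDdef, hedef] at hDa; linarith
          simp only [hqdef, hφdef, mul_one, hDa]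
          rw [if_pos le_rfl, heq, hb1, hσy]
        · simp only [hqdef, hφdef, mul_one]
          rw [if_neg (by rwa [mul_one] at hcase), hDe1, hσy]
    have hcle2 : c ≤ Φ Fq := hFmmin Fq hFqA
    have hΦFq : Φ Fq = eVariationOn q (Icc 0 1) := by
      rw [← evar_restrict_eq q]
      congr 1
    rw [hΦFq] at hcle2
    exact absurd hqlt (not_lt.mpr hcle2)
  have hinj : InjOn σ (Icc 0 1) := by
    intro u hu v hv huv
    by_contra hne
    rcases lt_or_gt_of_ne hne with h | h
    · exact haux u v hu hv h huv
    · exact haux v u hv hu h huv.symm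
  exact ⟨σ, ⟨hσc, hσx, hσy⟩, hinj, by rw [hσevar]; exact hcleW⟩

end Auxiliary

/-- If `X` is a length space in which any two distinct points are joined by a unique
rectifiable arc, then `X` is a geodesic space. -/
theorem geodesic_of_unique_rect_arcs {X : Type*} [MetricSpace X]
    (hl : IsLengthSpace X)
    (hu : ∀ x y : X, x ≠ y → ∃! A : Set X, IsRectArc A x y) :
    IsGeodesicSpace X := by
  intro x y
  by_cases hxy : x = y
  · subst hxy
    refine ⟨fun _ => x, ⟨continuousOn_const, rfl, rfl⟩, ?_⟩
    rw [edist_self]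
    apply eVariationOn.constant_on
    rintro _ ⟨_, _, rfl⟩ _ ⟨_, _, rfl⟩
    rfl
  · obtain ⟨A, hA, hAuniq⟩ := hu x y hxy
    obtain ⟨γA, hγA, hγAinj, hγAim, hγAfin⟩ := hA
    have h0m : (0:ℝ) ∈ Set.Icc (0:ℝ) 1 := ⟨le_rfl, zero_le_one⟩
    have h1m : (1:ℝ) ∈ Set.Icc (0:ℝ) 1 := ⟨zero_le_one, le_rfl⟩
    have hle : eVariationOn γA (Set.Icc 0 1) ≤ edist x y := by
      apply ENNReal.le_of_forall_pos_le_add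
      intro ε hε _
      have hlt : sInf (curveLengths x y) < edist x y + ε := by
        rw [← hl x y]
        exact ENNReal.lt_add_right (edist_ne_top x y) (by exact_mod_cast hε.ne')
      obtain ⟨ℓ, hℓmem, hℓlt⟩ := sInf_lt_iff.mp hlt
      obtain ⟨g, hgcurve, hglen⟩ := hℓmem
      have hℓtop : ℓ ≠ ⊤ := hℓlt.ne_top
      obtain ⟨σ, hσcurve, hσinj, hσle⟩ := exists_inj_curve hxy hgcurve hglen hℓtop
      have hσfin : eVariationOn σ (Set.Icc 0 1) ≠ ⊤ := ne_top_of_le_ne_top hℓtop hσle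
      have hrect : IsRectArc (σ '' Set.Icc 0 1) x y := ⟨σ, hσcurve, hσinj, rfl, hσfin⟩
      have hAeq : σ '' Set.Icc 0 1 = A := hAuniq _ hrect
      have hinv := evar_eq_of_same_arc hγA hσcurve hγAinj hσinj (hγAim ▸ hAeq ▸ rfl)
      rw [hinv]
      exact hσle.trans hℓlt.le
    have hge : edist x y ≤ eVariationOn γA (Set.Icc 0 1) := by
      have h2 := eVariationOn.edist_le γA h0m h1m
      rwa [hγA.2.1, hγA.2.2] at h2
    exact ⟨γA, hγA, le_antisymm hle hge⟩
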